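/- There exist sets A, B ⊆ ℕ such that the natural densities of A and of B both exist, but the natural density of A ∩ B does not exist (the relative frequencies |A ∩ B ∩ {1,…,n}| / n do not converge). -/

import Mathlib

open Filter Topology

/-- Number of elements of `A` among `{1, …, n}`. -/
noncomputable def cnt (A : Set ℕ) (n : ℕ) : ℕ :=
  Nat.card (A ∩ Set.Icc 1 n : Set ℕ)

/-- `A ⊆ ℕ` has natural density `p`: the relative frequencies `|A ∩ {1,…,n}| / n`
converge to `p` as `n → ∞`. -/
def HasDensity (A : Set ℕ) (p : ℝ) : Prop :=
  Tendsto (fun n : ℕ => (cnt A n : ℝ) / n) atTop (𝓝 p)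

/-- `S` is an admissible selection rule for `X` with limit `p`: the subselected
frequencies `|X ∩ S ∩ {1,…,n}| / |S ∩ {1,…,n}|` converge to `p` as `n → ∞`. -/
def Admissible (X S : Set ℕ) (p : ℝ) : Prop :=
  Tendsto (fun n : ℕ => (cnt (X ∩ S) n : ℝ) / (cnt S n : ℝ)) atTop (𝓝 p)

lemma cnt_eq_card (X : Set ℕ) [DecidablePred (· ∈ X)] (n : ℕ) :
    cnt X n = ((Finset.Icc 1 n).filter (· ∈ X)).card := by
  rw [cnt, Nat.card_coe_set_eq]
  have h : (X ∩ Set.Icc 1 n : Set ℕ) = ((Finset.Icc 1 n).filter (· ∈ X) : Finset ℕ) := by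
    ext k; simp [and_comm]; tauto
  rw [h, Set.ncard_coe_finset]

lemma cnt_zero (X : Set ℕ) : cnt X 0 = 0 := by
  classical
  simp [cnt_eq_card]

lemma cnt_succ (X : Set ℕ) [DecidablePred (· ∈ X)] (n : ℕ) :
    cnt X (n + 1) = cnt X n + if n + 1 ∈ X then 1 else 0 := by
  rw [cnt_eq_card, cnt_eq_card]
  have h : Finset.Icc 1 (n+1) = insert (n+1) (Finset.Icc 1 n) := by
    ext k; simp; omega
  rw [h, Finset.filter_insert]
  by_cases hx : n + 1 ∈ X <;> simp [hx, Finset.card_insert_of_notMem]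

lemma cnt_mono (X : Set ℕ) : Monotone (cnt X) := by
  classical
  apply monotone_nat_of_le_succ
  intro n
  rw [cnt_succ]
  omega

lemma cnt_all_in (X : Set ℕ) [DecidablePred (· ∈ X)] {a b : ℕ} (hab : a ≤ b)
    (h : ∀ k, a < k → k ≤ b → k ∈ X) : cnt X b = cnt X a + (b - a) := by
  induction b, hab using Nat.le_induction with
  | base => simp
  | succ m hm ih =>
    rw [cnt_succ, ih (fun k h1 h2 => h k h1 (by omega)), if_pos (h _ (by omega) le_rfl)]
    omega

lemma cnt_all_notin (X : Set ℕ) [DecidablePred (· ∈ X)] {a b : ℕ} (hab : a ≤ b)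
    (h : ∀ k, a < k → k ≤ b → k ∉ X) : cnt X b = cnt X a := by
  induction b, hab using Nat.le_induction with
  | base => rfl
  | succ m hm ih =>
    rw [cnt_succ, ih (fun k h1 h2 => h k h1 (by omega)), if_neg (h _ (by omega) le_rfl)]
    simp

/-- The "oscillating" index set: `k` such that `⌊log₂ k⌋` is even. -/
def Sset : Set ℕ := {k | Nat.log 2 k % 2 = 0}

instance : DecidablePred (· ∈ Sset) := fun k => by unfold Sset; infer_instance

def Aset : Set ℕ := {n | n % 2 = 0}
instance : DecidablePred (· ∈ Aset) := fun k => by unfold Aset; infer_instance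

def Bset : Set ℕ := {n | n % 2 = 0 ↔ n / 2 ∈ Sset}
instance : DecidablePred (· ∈ Bset) := fun k => by unfold Bset; infer_instance

lemma mem_B_even (k : ℕ) : (2 * k) ∈ Bset ↔ Nat.log 2 k % 2 = 0 := by
  have h1 : (2 * k) % 2 = 0 := by omega
  have h2 : (2 * k) / 2 = k := by omega
  simp only [Bset, Sset, Set.mem_setOf_eq, h1, h2]
  tauto

lemma mem_B_odd (k : ℕ) : (2 * k + 1) ∈ Bset ↔ ¬ (Nat.log 2 k % 2 = 0) := by
  have h1 : ¬ ((2 * k + 1) % 2 = 0) := by omega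
  have h2 : (2 * k + 1) / 2 = k := by omega
  simp only [Bset, Sset, Set.mem_setOf_eq, h2]
  constructor
  · intro h hc; exact h1 (h.mpr hc)
  · intro h; constructor
    · intro hc; exact absurd hc h1
    · intro hc; exact absurd hc h

lemma cnt_A (n : ℕ) : cnt Aset n = n / 2 := by
  induction n with
  | zero => exact cnt_zero _
  | succ m ih =>
    rw [cnt_succ, ih]
    by_cases h : (m + 1) ∈ Aset
    · rw [if_pos h]
      have : (m + 1) % 2 = 0 := h
      omega
    · rw [if_neg h]
      have : ¬ ((m + 1) % 2 = 0) := h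
      omega

lemma cnt_B_odd (m : ℕ) : cnt Bset (2 * m + 1) = m := by
  induction m with
  | zero =>
    show cnt Bset (0 + 1) = 0
    rw [cnt_succ, cnt_zero]
    have h : (0 + 1 : ℕ) ∉ Bset := by
      have := mem_B_odd 0
      simpa [Nat.log_zero_right] using this
    simp [h]
  | succ k ih =>
    have h1 : 2 * (k + 1) + 1 = (2 * k + 1) + 1 + 1 := by ring
    have h2 : 2 * k + 1 + 1 = 2 * (k + 1) := by ring
    have h3 : 2 * k + 1 + 1 + 1 = 2 * (k + 1) + 1 := by ring
    rw [h1, cnt_succ, cnt_succ, ih]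
    have hev : (2 * k + 1 + 1 ∈ Bset) ↔ Nat.log 2 (k + 1) % 2 = 0 := by
      rw [h2]; exact mem_B_even _
    have hod : (2 * k + 2 + 1 ∈ Bset) ↔ ¬ (Nat.log 2 (k + 1) % 2 = 0) := by
      have h4 : 2 * k + 2 + 1 = 2 * (k + 1) + 1 := by ring
      rw [h4]; exact mem_B_odd _
    by_cases hc : Nat.log 2 (k + 1) % 2 = 0
    · rw [if_pos (hev.mpr hc), if_neg (by rw [hod]; tauto)]
    · rw [if_neg (by rw [hev]; tauto), if_pos (hod.mpr hc)]
open Filter Topology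

lemma cnt_B_bounds (n : ℕ) : n ≤ 2 * cnt Bset n + 2 ∧ 2 * cnt Bset n ≤ n + 2 := by
  rcases Nat.even_or_odd n with ⟨m, hm⟩ | ⟨m, hm⟩
  · subst hm
    rcases Nat.eq_zero_or_pos m with rfl | hm1
    · simp [cnt_zero]
    · have hlo : cnt Bset (2 * (m - 1) + 1) ≤ cnt Bset (m + m) := cnt_mono _ (by omega)
      have hhi : cnt Bset (m + m) ≤ cnt Bset (2 * m + 1) := cnt_mono _ (by omega)
      rw [cnt_B_odd] at hlo hhi
      omega
  · subst hm
    have := cnt_B_odd m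
    omega

instance : DecidablePred (· ∈ Aset ∩ Bset) := fun k =>
  inferInstanceAs (Decidable (k ∈ Aset ∧ k ∈ Bset))

lemma mem_AB (k : ℕ) : (k ∈ Aset ∩ Bset) ↔ k % 2 = 0 ∧ k / 2 ∈ Sset := by
  constructor
  · rintro ⟨ha, hb⟩
    exact ⟨ha, (hb.mp ha)⟩
  · rintro ⟨h1, h2⟩
    exact ⟨h1, by constructor <;> intro <;> [exact h2; exact h1]⟩

lemma cnt_AB (n : ℕ) : cnt (Aset ∩ Bset) n = cnt Sset (n / 2) := by
  induction n with
  | zero => rw [cnt_zero]; exact (cnt_zero _).symm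
  | succ m ih =>
    rw [cnt_succ, ih]
    by_cases h : (m + 1) % 2 = 0
    · have h2 : (m + 1) / 2 = m / 2 + 1 := by omega
      rw [h2, cnt_succ]
      have h3 : (m + 1 ∈ Aset ∩ Bset) ↔ (m / 2 + 1 ∈ Sset) := by
        rw [mem_AB]
        have : (m + 1) / 2 = m / 2 + 1 := h2
        rw [this]
        tauto
      by_cases h4 : m / 2 + 1 ∈ Sset
      · rw [if_pos (h3.mpr h4), if_pos h4]
      · rw [if_neg (fun hc => h4 (h3.mp hc)), if_neg h4]
    · have h2 : (m + 1) / 2 = m / 2 := by omega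
      rw [h2, if_neg (fun hc => h ((mem_AB _).mp hc).1)]
      omega

/-- counting in blocks of `Sset` -/
lemma cnt_S_block (t : ℕ) :
    cnt Sset (2 ^ (t + 1) - 1) = cnt Sset (2 ^ t - 1) + if t % 2 = 0 then 2 ^ t else 0 := by
  have hpow : (1 : ℕ) ≤ 2 ^ t := Nat.one_le_two_pow
  have hpow2 : 2 ^ t < 2 ^ (t + 1) := by
    have : 2 ^ (t+1) = 2 * 2 ^ t := by ring
    omega
  have hab : 2 ^ t - 1 ≤ 2 ^ (t + 1) - 1 := by omega
  have hlog : ∀ k, 2 ^ t - 1 < k → k ≤ 2 ^ (t + 1) - 1 → Nat.log 2 k = t := by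
    intro k h1 h2
    exact Nat.log_eq_of_pow_le_of_lt_pow (by omega) (by omega)
  by_cases ht : t % 2 = 0
  · rw [if_pos ht, cnt_all_in Sset hab]
    · have : 2 ^ (t+1) = 2 * 2 ^ t := by ring
      omega
    · intro k h1 h2
      show Nat.log 2 k % 2 = 0
      rw [hlog k h1 h2]; exact ht
  · rw [if_neg ht, Nat.add_zero]
    refine cnt_all_notin Sset hab ?_
    intro k h1 h2
    show ¬ (Nat.log 2 k % 2 = 0)
    rw [hlog k h1 h2]; exact ht

lemma cnt_S_one : cnt Sset 1 = 1 := by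
  have : cnt Sset (0 + 1) = cnt Sset 0 + if (0 + 1 : ℕ) ∈ Sset then 1 else 0 := cnt_succ _ _
  have h1 : (0 + 1 : ℕ) ∈ Sset := by show Nat.log 2 1 % 2 = 0; simp [Nat.log_one_right]
  rw [if_pos h1, cnt_zero] at this
  simpa using this

lemma cnt_S_odd_pow (m : ℕ) : 3 * cnt Sset (2 ^ (2 * m + 1) - 1) + 1 = 4 ^ (m + 1) := by
  induction m with
  | zero => simpa [cnt_S_one] using rfl
  | succ k ih =>
    have h1 := cnt_S_block (2 * k + 1)
    have h2 := cnt_S_block (2 * k + 2)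
    rw [if_neg (by omega)] at h1
    rw [if_pos (by omega)] at h2
    have h3 : 2 * (k + 1) + 1 = (2 * k + 2) + 1 := by ring
    rw [h3, h2, h1]
    have h4 : (2:ℕ) ^ (2 * k + 2) = 4 ^ (k + 1) := by
      rw [show 2 * k + 2 = 2 * (k + 1) by ring, pow_mul]; norm_num
    have h5 : (4:ℕ) ^ (k + 1 + 1) = 4 * 4 ^ (k + 1) := by ring
    omega

lemma cnt_S_even_pow (m : ℕ) :
    cnt Sset (2 ^ (2 * m + 2) - 1) = cnt Sset (2 ^ (2 * m + 1) - 1) := by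
  have h := cnt_S_block (2 * m + 1)
  rw [if_neg (by omega)] at h
  simpa [show 2 * m + 1 + 1 = 2 * m + 2 by ring] using h

lemma tendsto_half (f : ℕ → ℕ) (h : ∀ n : ℕ, n ≤ 2 * f n + 2 ∧ 2 * f n ≤ n + 2) :
    Tendsto (fun n : ℕ => (f n : ℝ) / n) atTop (𝓝 (1/2)) := by
  rw [show (1/2 : ℝ) = 1/2 + 0 by ring]
  have heq : ∀ᶠ n : ℕ in atTop, (1/2 : ℝ) + (2 * (f n : ℝ) - n) / (2 * n) = (f n : ℝ) / n := by
    filter_upwards [eventually_ge_atTop 1] with n hn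
    have hn' : (0:ℝ) < n := by exact_mod_cast hn
    field_simp
    ring
  refine Tendsto.congr' heq (Tendsto.add tendsto_const_nhds ?_)
  refine squeeze_zero_norm' (a := fun n : ℕ => 1 / (n:ℝ)) ?_ tendsto_one_div_atTop_nhds_zero_nat
  filter_upwards [eventually_ge_atTop 1] with n hn
  have hn' : (0:ℝ) < n := by exact_mod_cast hn
  have h1 : ((n:ℝ)) ≤ 2 * (f n) + 2 := by exact_mod_cast (h n).1
  have h2 : 2 * ((f n : ℕ):ℝ) ≤ n + 2 := by exact_mod_cast (h n).2
  rw [Real.norm_eq_abs, abs_div]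
  have hnum : |2 * ((f n:ℕ):ℝ) - n| ≤ 2 := by
    rw [abs_le]; constructor <;> linarith
  have hden : |2 * (n:ℝ)| = 2 * n := abs_of_pos (by linarith)
  rw [hden]
  calc |2 * ((f n:ℕ):ℝ) - n| / (2 * n) ≤ 2 / (2 * n) := by
        apply div_le_div_of_nonneg_right hnum (by linarith) |>.trans_eq rfl
    _ = 1 / n := by field_simp

lemma key_lim (a : ℝ) (ha : 4 ≤ a) :
    Tendsto (fun m : ℕ => (((4:ℝ) ^ (m+1) - 1)/3) / (a * 4 ^ m - 2)) atTop (𝓝 (4 / (3 * a))) := by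
  have hv : Tendsto (fun m : ℕ => ((1:ℝ)/4) ^ m) atTop (𝓝 0) :=
    tendsto_pow_atTop_nhds_zero_of_lt_one (by norm_num) (by norm_num)
  have main : Tendsto (fun m : ℕ => ((4:ℝ) - (1/4:ℝ)^m) / (3 * (a - 2 * (1/4:ℝ)^m)))
      atTop (𝓝 ((4 - 0) / (3 * (a - 2 * 0)))) := by
    apply Tendsto.div (tendsto_const_nhds.sub hv)
    · exact (tendsto_const_nhds.sub (hv.const_mul 2)).const_mul 3
    · intro hc
      have : a = 0 := by nlinarith [hc]
      linarith
  have heq : ∀ m : ℕ, ((4:ℝ) - (1/4:ℝ)^m) / (3 * (a - 2 * (1/4:ℝ)^m))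
      = (((4:ℝ) ^ (m+1) - 1)/3) / (a * 4 ^ m - 2) := by
    intro m
    have hu : (0:ℝ) < 4 ^ m := by positivity
    have hu1 : (1:ℝ) ≤ 4 ^ m := one_le_pow₀ (by norm_num : (1:ℝ) ≤ 4)
    have hvu : ((1:ℝ)/4)^m = ((4:ℝ)^m)⁻¹ := by
      rw [div_pow, one_pow, one_div]
    have hd1 : a * 4 ^ m - 2 ≠ 0 := by nlinarith
    have hd2 : a - 2 * ((4:ℝ)^m)⁻¹ ≠ 0 := by
      have : ((4:ℝ)^m)⁻¹ ≤ 1 := by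
        apply inv_le_one_of_one_le₀ hu1
      nlinarith [this, inv_pos.mpr hu]
    rw [hvu, pow_succ]
    field_simp
  have := main.congr heq
  convert this using 2
  norm_num

lemma pow2_odd (m : ℕ) : (2:ℕ) ^ (2 * m + 1) = 2 * 4 ^ m := by
  rw [pow_succ, pow_mul]; norm_num; ring

lemma pow2_even (m : ℕ) : (2:ℕ) ^ (2 * m + 2) = 4 * 4 ^ m := by
  rw [show 2 * m + 2 = 2 * (m + 1) by ring, pow_mul]
  norm_num; ring

lemma E_cast (m : ℕ) : ((cnt Sset (2 ^ (2 * m + 1) - 1) : ℕ) : ℝ) = ((4:ℝ) ^ (m+1) - 1) / 3 := by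
  have h := cnt_S_odd_pow m
  have : ((3 * cnt Sset (2 ^ (2 * m + 1) - 1) + 1 : ℕ) : ℝ) = ((4:ℕ) ^ (m + 1) : ℕ) := by
    exact_mod_cast congrArg (Nat.cast : ℕ → ℝ) h
  push_cast at this
  linarith

lemma subexists (φ : ℕ → ℕ) (a : ℝ) (ha : 4 ≤ a)
    (hge : ∀ m, m ≤ φ m)
    (hcnt : ∀ m, ((cnt (Aset ∩ Bset) (φ m) : ℕ) : ℝ) = ((4:ℝ) ^ (m+1) - 1) / 3)
    (hφ : ∀ m, ((φ m : ℕ) : ℝ) = a * 4 ^ m - 2)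
    {c : ℝ} (hc : Tendsto (fun n : ℕ => (cnt (Aset ∩ Bset) n : ℝ) / n) atTop (𝓝 c)) :
    c = 4 / (3 * a) := by
  have hmono : Tendsto φ atTop atTop := tendsto_atTop_mono hge tendsto_id
  have h1 : Tendsto (fun m : ℕ => (cnt (Aset ∩ Bset) (φ m) : ℝ) / (φ m)) atTop (𝓝 c) :=
    hc.comp hmono
  have h2 : Tendsto (fun m : ℕ => (((4:ℝ) ^ (m+1) - 1)/3) / (a * 4 ^ m - 2)) atTop (𝓝 c) := by
    refine h1.congr fun m => ?_
    rw [hcnt m, hφ m]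
  exact tendsto_nhds_unique h2 (key_lim a ha)

/-- The density logic is not closed under intersections: there are sets `A`, `B`
whose natural densities exist while the natural density of `A ∩ B` does not. -/
theorem density_logic_not_closed_inter :
    ∃ A B : Set ℕ, (∃ a : ℝ, HasDensity A a) ∧ (∃ b : ℝ, HasDensity B b) ∧
      ¬ ∃ c : ℝ, HasDensity (A ∩ B) c := by
  refine ⟨Aset, Bset, ⟨1/2, ?_⟩, ⟨1/2, ?_⟩, ?_⟩
  · exact tendsto_half (cnt Aset) (fun n => by rw [cnt_A]; omega)
  · exact tendsto_half (cnt Bset) cnt_B_bounds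
  · rintro ⟨c, hc⟩
    have hc' : Tendsto (fun n : ℕ => (cnt (Aset ∩ Bset) n : ℝ) / n) atTop (𝓝 c) := hc
    have e1 : c = 4 / (3 * 4) := by
      refine subexists (fun m => 2 * (2 ^ (2 * m + 1) - 1)) 4 le_rfl ?_ ?_ ?_ hc'
      · intro m
        show m ≤ 2 * (2 ^ (2 * m + 1) - 1)
        have h1 : m < 2 ^ m := Nat.lt_two_pow_self
        have h2 : (2:ℕ) ^ m ≤ 2 ^ (2 * m + 1) := Nat.pow_le_pow_right (by norm_num) (by omega)
        omega
      · intro m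
        have hd : (2 * (2 ^ (2 * m + 1) - 1)) / 2 = 2 ^ (2 * m + 1) - 1 := by omega
        rw [cnt_AB, hd, E_cast]
      · intro m
        have hp := pow2_odd m
        have h4 : (1:ℕ) ≤ 4 ^ m := Nat.one_le_pow _ _ (by norm_num)
        show (((2 * (2 ^ (2 * m + 1) - 1) : ℕ)) : ℝ) = 4 * 4 ^ m - 2
        have : (2 * (2 ^ (2 * m + 1) - 1) : ℕ) = 4 * 4 ^ m - 2 := by omega
        rw [this, Nat.cast_sub (by omega)]
        push_cast
        ring
    have e2 : c = 4 / (3 * 8) := by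
      refine subexists (fun m => 2 * (2 ^ (2 * m + 2) - 1)) 8 (by norm_num) ?_ ?_ ?_ hc'
      · intro m
        show m ≤ 2 * (2 ^ (2 * m + 2) - 1)
        have h1 : m < 2 ^ m := Nat.lt_two_pow_self
        have h2 : (2:ℕ) ^ m ≤ 2 ^ (2 * m + 2) := Nat.pow_le_pow_right (by norm_num) (by omega)
        omega
      · intro m
        have hd : (2 * (2 ^ (2 * m + 2) - 1)) / 2 = 2 ^ (2 * m + 2) - 1 := by omega
        rw [cnt_AB, hd, cnt_S_even_pow, E_cast]
      · intro m
        have hp := pow2_even m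
        have h4 : (1:ℕ) ≤ 4 ^ m := Nat.one_le_pow _ _ (by norm_num)
        show (((2 * (2 ^ (2 * m + 2) - 1) : ℕ)) : ℝ) = 8 * 4 ^ m - 2
        have : (2 * (2 ^ (2 * m + 2) - 1) : ℕ) = 8 * 4 ^ m - 2 := by omega
        rw [this, Nat.cast_sub (by omega)]
        push_cast
        ring
    rw [e1] at e2
    norm_num at e2
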